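/- Let G be a graph containing no copy of K4^- (the diamond graph). Let C be a shortest odd cycle in G with |V(C)| = 2t+1. Then every vertex v of G not on C has at most t neighbors on C. -/

import Mathlib

open SimpleGraph


/-- `G` contains a copy of `K₄⁻` (the diamond graph): four distinct vertices carrying all
six possible edges except the one between the last two. -/
def HasDiamond {V : Type*} (G : SimpleGraph V) : Prop :=
  ∃ a b c d : V, a ≠ b ∧ a ≠ c ∧ a ≠ d ∧ b ≠ c ∧ b ≠ d ∧ c ≠ d ∧
    G.Adj a b ∧ G.Adj a c ∧ G.Adj a d ∧ G.Adj b c ∧ G.Adj b d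

/-- `G` is `K₄⁻`-saturated: it contains no diamond, but adding any non-edge creates one. -/
def DiamondSaturated {V : Type*} (G : SimpleGraph V) : Prop :=
  ¬ HasDiamond G ∧ ∀ u v : V, u ≠ v → ¬ G.Adj u v →
    HasDiamond (G ⊔ SimpleGraph.fromEdgeSet {s(u, v)})


lemma cyclic_next_adj' {α : Type*} (R : α → α → Prop) (l : List α) (hl : l ≠ [])
    (hchain : List.Chain' R l) (hlast : R (l.getLast hl) (l.head hl))
    (i : Fin l.length) :
    R (l.get i) (l.get ⟨(i+1) % l.length, Nat.mod_lt _ (i.1.zero_le.trans_lt i.2)⟩) := by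
  rcases lt_or_eq_of_le (Nat.succ_le_of_lt i.2) with h | h
  · have : (i+1) % l.length = i+1 := Nat.mod_eq_of_lt h
    simp only [this]
    exact List.isChain_iff_getElem.mp hchain i (by omega)
  · have h' : (i:ℕ)+1 = l.length := h
    have h0 : ((i:ℕ)+1) % l.length = 0 := by rw [h']; exact Nat.mod_self _
    have hlastg : l.getLast hl = l.get ⟨l.length - 1, by omega⟩ := by
      rw [List.getLast_eq_getElem]; simp [List.get_eq_getElem]
    have hheadg : l.head hl = l.get ⟨0, by omega⟩ := by
      exact (List.get_mk_zero (by omega)).symm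
    have hi : (i : ℕ) = l.length - 1 := by omega
    simp only [h0]
    have : l.get i = l.getLast hl := by rw [hlastg]; congr 1; exact Fin.ext hi
    rw [this, ← hheadg]
    exact hlast

lemma triangle_cycle' {V : Type*} (G : SimpleGraph V) {a b c : V}
    (hab : G.Adj a b) (hbc : G.Adj b c) (hca : G.Adj c a) :
    (Walk.cons hab (Walk.cons hbc (Walk.cons hca Walk.nil))).IsCycle := by
  have h1 := hab.ne
  have h2 := hbc.ne
  have h3 := hca.ne
  simp [Walk.isCycle_def, Walk.isTrail_def, Sym2.eq, Sym2.rel_iff', Walk.isPath_def]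
  aesop

theorem stmt_1 {V : Type*} [DecidableEq V] (G : SimpleGraph V) [DecidableRel G.Adj]
    (hfree : ¬ HasDiamond G) (t : ℕ) (u : V) (C : G.Walk u u)
    (hC : C.IsCycle) (hlen : C.length = 2 * t + 1)
    (hshort : ∀ (w : V) (D : G.Walk w w), D.IsCycle → Odd D.length → 2 * t + 1 ≤ D.length)
    (v : V) (hv : v ∉ C.support) :
    (C.support.toFinset.filter (fun c => G.Adj v c)).card ≤ t := by
  classical
  obtain ⟨L, hL⟩ : ∃ L : List V, C.support.tail = L := ⟨_, rfl⟩
  have hsup : C.support = u :: L := by rw [C.support_eq_cons, hL]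
  have hLlen : L.length = 2 * t + 1 := by
    have := C.length_support
    have : C.support.length = C.length + 1 := C.length_support
    have hts : C.support.length = L.length + 1 := by rw [hsup]; simp
    omega
  have hLne : L ≠ [] := by
    apply List.ne_nil_of_length_pos; omega
  have hLnd : L.Nodup := hL ▸ hC.support_nodup
  have hgq : L.getLast? = some u := by
    have hg : C.support.getLast? = some u := by
      rw [List.getLast?_eq_getLast_of_ne_nil C.support_ne_nil, C.getLast_support]
    rw [hsup] at hg
    cases L with
    | nil => exact absurd rfl hLne
    | cons a L' => rwa [List.getLast?_cons_cons] at hg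
  have hlastu' : ∃ h, u = L.getLast h :=
    List.mem_getLast?_eq_getLast (Option.mem_def.mpr hgq)
  have huL : u ∈ L := by
    obtain ⟨h, hh⟩ := hlastu'
    rw [hh]; exact List.getLast_mem h
  have hmemL : ∀ x, x ∈ C.support → x ∈ L := by
    intro x hx
    rw [hsup] at hx
    rcases List.mem_cons.mp hx with h | h
    · exact h ▸ huL
    · exact h
  have hchainC : List.Chain' G.Adj (u :: L) := hsup ▸ C.isChain_adj_support
  have hchain : List.Chain' G.Adj L := hchainC.tail
  have hlastu : L.getLast hLne = u := by
    obtain ⟨h, hh⟩ := hlastu'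
    exact hh.symm
  have hheadadj : G.Adj u (L.head hLne) := by
    obtain ⟨a, L', rfl⟩ : ∃ a L', L = a :: L' := by
      cases L with
      | nil => exact absurd rfl hLne
      | cons a L' => exact ⟨a, L', rfl⟩
    exact (List.isChain_cons_cons.mp hchainC).1
  have hadj : ∀ i : Fin L.length, G.Adj (L.get i)
      (L.get ⟨(i+1) % L.length, Nat.mod_lt _ (i.1.zero_le.trans_lt i.2)⟩) := by
    intro i
    exact cyclic_next_adj' G.Adj L hLne hchain (by rw [hlastu]; exact hheadadj) i
  set f : V → V := fun x => if h : x ∈ L then L.next x h else x with hfdef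
  have hf_get : ∀ i : Fin L.length, f (L.get i) =
      L.get ⟨(i+1) % L.length, Nat.mod_lt _ (i.1.zero_le.trans_lt i.2)⟩ := by
    intro i
    simp only [hfdef]
    rw [dif_pos (L.get_mem i)]
    exact List.next_getElem L hLnd i i.2
  have hf_adj : ∀ x, x ∈ L → G.Adj x (f x) := by
    intro x hx
    obtain ⟨i, rfl⟩ := List.get_of_mem hx
    rw [hf_get]
    exact hadj i
  have hf_mem : ∀ x, x ∈ L → f x ∈ L := by
    intro x hx
    obtain ⟨i, rfl⟩ := List.get_of_mem hx
    rw [hf_get]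
    exact L.get_mem _
  have hmodinj : ∀ i j : Fin L.length, ((i:ℕ)+1) % L.length = ((j:ℕ)+1) % L.length → i = j := by
    intro i j hij
    have hi2 := i.2; have hj2 := j.2
    apply Fin.ext
    rcases lt_or_eq_of_le (Nat.succ_le_of_lt hi2) with h | h <;>
      rcases lt_or_eq_of_le (Nat.succ_le_of_lt hj2) with h' | h'
    · rw [Nat.mod_eq_of_lt h, Nat.mod_eq_of_lt h'] at hij; omega
    · have hj' : (j:ℕ)+1 = L.length := h'
      rw [Nat.mod_eq_of_lt h, show ((j:ℕ)+1) % L.length = 0 by rw [hj']; exact Nat.mod_self _] at hij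
      omega
    · have hi' : (i:ℕ)+1 = L.length := h
      rw [Nat.mod_eq_of_lt h', show ((i:ℕ)+1) % L.length = 0 by rw [hi']; exact Nat.mod_self _] at hij
      omega
    · omega
  have hf_inj : ∀ x ∈ L, ∀ y ∈ L, f x = f y → x = y := by
    intro x hx y hy hxy
    obtain ⟨i, rfl⟩ := List.get_of_mem hx
    obtain ⟨j, rfl⟩ := List.get_of_mem hy
    rw [hf_get, hf_get] at hxy
    have := (hLnd.get_inj_iff.mp hxy)
    have : ((i:ℕ)+1) % L.length = ((j:ℕ)+1) % L.length := congrArg Fin.val this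
    rw [hmodinj i j this]
  set S := C.support.toFinset.filter (fun c => G.Adj v c) with hSdef
  have hSmem : ∀ x, x ∈ S → x ∈ L ∧ G.Adj v x := by
    intro x hx
    rw [hSdef, Finset.mem_filter, List.mem_toFinset] at hx
    exact ⟨hmemL x hx.1, hx.2⟩
  have hvL : v ∉ L := fun h => hv (by rw [hsup]; exact List.mem_cons_of_mem _ h)
  -- no two cyclically-consecutive vertices of C are both neighbors of v
  have hcons : ∀ x, x ∈ L → G.Adj v x → G.Adj v (f x) → False := by
    intro x hx h1 h2
    have hxy : G.Adj x (f x) := hf_adj x hx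
    set y := f x with hy
    have hyL : y ∈ L := hf_mem x hx
    have hD : (Walk.cons h1 (Walk.cons hxy (Walk.cons h2.symm Walk.nil))).IsCycle :=
      triangle_cycle' G h1 hxy h2.symm
    have h3 : 2 * t + 1 ≤ 3 := by
      have := hshort v _ hD (by show Odd 3; decide)
      simpa using this
    have h3' : 3 ≤ C.length := hC.three_le_length
    have hn3 : L.length = 3 := by omega
    -- triangle case: build a diamond
    obtain ⟨i, hix⟩ := List.get_of_mem hx
    set i1 : Fin L.length := ⟨((i:ℕ)+1) % L.length, Nat.mod_lt _ (i.1.zero_le.trans_lt i.2)⟩ with hi1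
    have hyget : y = L.get i1 := by rw [hy, ← hix, hf_get]
    set i2 : Fin L.length := ⟨((i1:ℕ)+1) % L.length, Nat.mod_lt _ (i1.1.zero_le.trans_lt i1.2)⟩ with hi2
    set z := L.get i2 with hz
    have hzL : z ∈ L := L.get_mem _
    have hyz : G.Adj y z := by
      rw [hyget, hz]
      exact hadj i1
    have hfz : f z = L.get ⟨((i2:ℕ)+1) % L.length, Nat.mod_lt _ (i2.1.zero_le.trans_lt i2.2)⟩ := hf_get i2
    have hfzx : f z = x := by
      rw [hfz, ← hix]
      congr 1
      apply Fin.ext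
      simp only [hi2, hi1, hn3]
      have hi3 : (i:ℕ) < 3 := hn3 ▸ i.2
      omega
    have hzx : G.Adj z x := by
      have := hf_adj z hzL
      rwa [hfzx] at this
    -- diamond on (y, x, v, z)
    apply hfree
    refine ⟨y, x, v, z, hxy.ne', h2.ne', hyz.ne, h1.ne', hzx.ne', ?_,
      hxy.symm, h2.symm, hyz, h1.symm, hzx.symm⟩
    exact fun h => hvL (h ▸ hzL)
  -- counting via the injection
  set T := S.image f with hTdef
  have hdisj : Disjoint S T := by
    rw [Finset.disjoint_right]
    intro a haT haS
    rw [hTdef, Finset.mem_image] at haT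
    obtain ⟨b, hbS, hba⟩ := haT
    obtain ⟨hbL, hbv⟩ := hSmem b hbS
    obtain ⟨_, hav⟩ := hSmem a haS
    exact hcons b hbL hbv (hba ▸ hav)
  have hcardT : T.card = S.card := by
    rw [hTdef]
    apply Finset.card_image_of_injOn
    intro a ha b hb hab
    exact hf_inj a (hSmem a ha).1 b (hSmem b hb).1 hab
  have hsubL : S ∪ T ⊆ L.toFinset := by
    intro a ha
    rw [Finset.mem_union] at ha
    rw [List.mem_toFinset]
    rcases ha with h | h
    · exact (hSmem a h).1
    · rw [hTdef, Finset.mem_image] at h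
      obtain ⟨b, hbS, hba⟩ := h
      exact hba ▸ hf_mem b (hSmem b hbS).1
  have hcardL : L.toFinset.card = 2 * t + 1 := by
    rw [List.toFinset_card_of_nodup hLnd, hLlen]
  have hle : (S ∪ T).card ≤ 2 * t + 1 := hcardL ▸ Finset.card_le_card hsubL
  rw [Finset.card_union_of_disjoint hdisj, hcardT] at hle
  omega
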